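/- Let X ∈ ℝ^{n×p}, λ > 0, β ∈ ℝ^p, ε ∈ ℝ^n, and let pen be a real-valued polyhedral gauge on ℝ^p (pen(b) = max{⟨u_1,b⟩,…,⟨u_k,b⟩} with u_1 = 0). Assume uniform uniqueness: for every y ∈ ℝ^n the set S_{X,λpen}(y) is a singleton {β̂(y)}. Assume that pen(b) ≥ pen(β) for every b ∈ ℝ^p with Xb = Xβ. For r ∈ ℕ set y^(r) = X(rβ) + ε. Then there exist r₀ ∈ ℕ and τ₀ > 0 such that for all r ≥ r₀, with τ = r·τ₀/2: (i) every b ∈ ℝ^p with ‖b − β̂(y^(r))‖_∞ ≤ τ satisfies ∂pen(b) ⊆ ∂pen(β), and (ii) there exists b₀ ∈ ℝ^p with ‖b₀ − β̂(y^(r))‖_∞ ≤ τ and ∂pen(b₀) = ∂pen(β). -/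

import Mathlib

open scoped RealInnerProductSpace

noncomputable section

/-- Convert a plain coordinate vector to an element of Euclidean space. -/
def toEuc {n : ℕ} (v : Fin n → ℝ) : EuclideanSpace ℝ (Fin n) :=
  (WithLp.equiv 2 (Fin n → ℝ)).symm v

/-- The subdifferential of `φ : ℝ^p → ℝ` at `β`:
`∂φ(β) = {s : φ(β) + ⟪s, b − β⟫ ≤ φ(b) for all b}`. -/
def subdiff {p : ℕ} (φ : EuclideanSpace ℝ (Fin p) → ℝ) (β : EuclideanSpace ℝ (Fin p)) :
    Set (EuclideanSpace ℝ (Fin p)) :=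
  {s | ∀ b, φ β + ⟪s, b - β⟫ ≤ φ b}

/-- `S_{X,λpen}(y)`: the set of minimizers of `b ↦ (1/2)‖y − Xb‖₂² + λ·pen(b)`. -/
def Smin {n p : ℕ} (X : Matrix (Fin n) (Fin p) ℝ) (lam : ℝ)
    (pen : EuclideanSpace ℝ (Fin p) → ℝ) (y : EuclideanSpace ℝ (Fin n)) :
    Set (EuclideanSpace ℝ (Fin p)) :=
  {b | ∀ b' : EuclideanSpace ℝ (Fin p), (1/2) * ‖y - toEuc (X.mulVec b)‖^2 + lam * pen b
        ≤ (1/2) * ‖y - toEuc (X.mulVec b')‖^2 + lam * pen b'}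

/-- The row space of a matrix `X`: `{Xᵀz : z ∈ ℝ^n}`. -/
def rowSpace {n p : ℕ} (X : Matrix (Fin n) (Fin p) ℝ) : Set (EuclideanSpace ℝ (Fin p)) :=
  Set.range fun z : EuclideanSpace ℝ (Fin n) => toEuc (X.transpose.mulVec z)

/-- The normal cone of a set `K` at `x`: `{s : ⟪s, b − x⟫ ≤ 0 for all b ∈ K}`. -/
def normalCone' {p : ℕ} (K : Set (EuclideanSpace ℝ (Fin p))) (x : EuclideanSpace ℝ (Fin p)) :
    Set (EuclideanSpace ℝ (Fin p)) :=
  {s | ∀ b ∈ K, ⟪s, b - x⟫ ≤ 0}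

/-- The supremum norm `‖x‖_∞` on Euclidean space. -/
def supNorm {p : ℕ} (x : EuclideanSpace ℝ (Fin p)) : ℝ := ⨆ i, abs (x i)

/-- `F` is an (exposed) face of `P`: `F = {x ∈ P : ⟪a,x⟫ = c}` for some valid inequality
`⟪a,x⟫ ≤ c` of `P`. -/
def IsFace {p : ℕ} (P F : Set (EuclideanSpace ℝ (Fin p))) : Prop :=
  ∃ (a : EuclideanSpace ℝ (Fin p)) (c : ℝ),
    (∀ x ∈ P, ⟪a, x⟫ ≤ c) ∧ F = {x ∈ P | ⟪a, x⟫ = c}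

section Aux

variable {p k : ℕ} (u : Fin (k + 1) → EuclideanSpace ℝ (Fin p))
  (pen : EuclideanSpace ℝ (Fin p) → ℝ)
  (hpen : ∀ x, pen x = Finset.univ.sup' Finset.univ_nonempty fun i => ⟪u i, x⟫)

include hpen

theorem pen_ge (i : Fin (k+1)) (x : EuclideanSpace ℝ (Fin p)) : ⟪u i, x⟫ ≤ pen x := by
  rw [hpen]; exact Finset.le_sup' (fun i => ⟪u i, x⟫) (Finset.mem_univ i)

theorem pen_le {x : EuclideanSpace ℝ (Fin p)} {c : ℝ} (h : ∀ i, ⟪u i, x⟫ ≤ c) : pen x ≤ c := by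
  rw [hpen]; exact Finset.sup'_le _ _ fun i _ => h i

theorem pen_exists (x : EuclideanSpace ℝ (Fin p)) : ∃ i, ⟪u i, x⟫ = pen x := by
  obtain ⟨i, _, hi⟩ := Finset.exists_mem_eq_sup' (Finset.univ_nonempty) fun i => ⟪u i, x⟫
  exact ⟨i, ((hpen x).trans hi).symm⟩

include u in
theorem pen_smul {c : ℝ} (hc : 0 ≤ c) (x : EuclideanSpace ℝ (Fin p)) :
    pen (c • x) = c * pen x := by
  rw [hpen, hpen]
  have := Finset.comp_sup'_eq_sup'_comp (s := (Finset.univ : Finset (Fin (k+1))))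
    (f := fun i => ⟪u i, x⟫) Finset.univ_nonempty (fun t => c * t)
    (fun a b => by exact mul_max_of_nonneg a b hc)
  rw [this]
  congr 1
  funext i
  simp [Function.comp, inner_smul_right]

theorem pen_add (x y : EuclideanSpace ℝ (Fin p)) : pen (x + y) ≤ pen x + pen y := by
  refine pen_le u pen hpen fun i => ?_
  rw [inner_add_right]
  exact add_le_add (pen_ge u pen hpen i x) (pen_ge u pen hpen i y)

theorem pen_zero : pen 0 = 0 := by
  have := pen_smul u pen hpen (le_refl (0:ℝ)) 0
  simpa using this

theorem pen_nonneg (hu : u 0 = 0) (x : EuclideanSpace ℝ (Fin p)) : 0 ≤ pen x := by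
  have := pen_ge u pen hpen 0 x
  rwa [hu, inner_zero_left] at this

/-- bound constant -/
theorem pen_le_M (x : EuclideanSpace ℝ (Fin p)) :
    pen x ≤ (Finset.univ.sup' Finset.univ_nonempty fun i => ‖u i‖) * ‖x‖ := by
  refine pen_le u pen hpen fun i => ?_
  calc ⟪u i, x⟫ ≤ ‖u i‖ * ‖x‖ := real_inner_le_norm _ _
  _ ≤ _ := by
      have : ‖u i‖ ≤ Finset.univ.sup' Finset.univ_nonempty fun i => ‖u i‖ :=
        Finset.le_sup' (fun i => ‖u i‖) (Finset.mem_univ i)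
      exact mul_le_mul_of_nonneg_right this (norm_nonneg x)

omit hpen in
theorem M_nonneg : 0 ≤ (Finset.univ.sup' Finset.univ_nonempty fun i : Fin (k+1) => ‖u i‖) :=
  le_trans (norm_nonneg (u 0)) (Finset.le_sup' (fun i : Fin (k+1) => ‖u i‖) (Finset.mem_univ 0))

theorem pen_lip (x y : EuclideanSpace ℝ (Fin p)) :
    pen x ≤ pen y + (Finset.univ.sup' Finset.univ_nonempty fun i => ‖u i‖) * ‖x - y‖ := by
  have h1 : pen x ≤ pen y + pen (x - y) := by
    have := pen_add u pen hpen y (x - y); simpa using this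
  exact h1.trans (by have := pen_le_M u pen hpen (x - y); linarith)

/-- characterization of the subdifferential of a gauge -/
theorem subdiff_char (x s : EuclideanSpace ℝ (Fin p)) :
    s ∈ subdiff pen x ↔ (∀ v, ⟪s, v⟫ ≤ pen v) ∧ pen x ≤ ⟪s, x⟫ := by
  constructor
  · intro hs
    constructor
    · intro v
      have := hs (x + v)
      have h2 : pen (x + v) ≤ pen x + pen v := pen_add u pen hpen x v
      have h3 : ⟪s, x + v - x⟫ = ⟪s, v⟫ := by rw [add_sub_cancel_left]
      linarith [this, h2, h3 ▸ this]
    · have := hs 0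
      have h0 : pen (0 : EuclideanSpace ℝ (Fin p)) = 0 := pen_zero u pen hpen
      rw [h0, zero_sub, inner_neg_right] at this
      linarith
  · rintro ⟨h1, h2⟩ b
    have := h1 b
    have h3 : ⟪s, b - x⟫ = ⟪s, b⟫ - ⟪s, x⟫ := inner_sub_right _ _ _
    linarith

theorem subdiff_smul {c : ℝ} (hc : 0 < c) (x : EuclideanSpace ℝ (Fin p)) :
    subdiff pen (c • x) = subdiff pen x := by
  ext s
  rw [subdiff_char u pen hpen, subdiff_char u pen hpen,
    pen_smul u pen hpen hc.le, inner_smul_right]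
  constructor
  · rintro ⟨h1, h2⟩; exact ⟨h1, le_of_mul_le_mul_left h2 hc⟩
  · rintro ⟨h1, h2⟩; exact ⟨h1, by nlinarith⟩


theorem dual_mem_hull (s : EuclideanSpace ℝ (Fin p)) (hs : ∀ v, ⟪s, v⟫ ≤ pen v) :
    s ∈ convexHull ℝ (Set.range u) := by
  by_contra hcon
  have hfin : (Set.range u).Finite := Set.finite_range u
  have hcl : IsClosed (convexHull ℝ (Set.range u)) := (hfin.isCompact_convexHull ℝ).isClosed
  obtain ⟨f, c, hf1, hf2⟩ :=
    geometric_hahn_banach_closed_point (convex_convexHull ℝ _) hcl hcon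
  set d := (InnerProductSpace.toDual ℝ (EuclideanSpace ℝ (Fin p))).symm f with hd
  have hdapp : ∀ x, ⟪d, x⟫ = f x := fun x => InnerProductSpace.toDual_symm_apply
  have hpend : pen d ≤ c := by
    refine pen_le u pen hpen fun i => ?_
    have : f (u i) < c := hf1 (u i) (subset_convexHull ℝ _ (Set.mem_range_self i))
    rw [real_inner_comm, hdapp]
    exact this.le
  have h1 : ⟪s, d⟫ ≤ pen d := hs d
  have h2 : c < f s := hf2
  rw [← hdapp s, real_inner_comm] at h2
  linarith

/-- the inactive gap `δ`: positive, and any index with gap `< δ` is active. -/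
theorem exists_gap (β : EuclideanSpace ℝ (Fin p)) :
    ∃ δ > (0:ℝ), ∀ i, pen β - ⟪u i, β⟫ < δ → ⟪u i, β⟫ = pen β := by
  classical
  set A : Finset (Fin (k+1)) := Finset.univ.filter (fun i => ⟪u i, β⟫ ≠ pen β) with hA
  rcases A.eq_empty_or_nonempty with hAe | hAne
  · refine ⟨1, one_pos, fun i _ => ?_⟩
    by_contra hne
    have : i ∈ A := Finset.mem_filter.mpr ⟨Finset.mem_univ i, hne⟩
    rw [hAe] at this
    exact absurd this (Finset.notMem_empty i)
  · refine ⟨A.inf' hAne (fun i => pen β - ⟪u i, β⟫), ?_, ?_⟩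
    · rw [gt_iff_lt, Finset.lt_inf'_iff]
      intro i hi
      have hne : ⟪u i, β⟫ ≠ pen β := by
        simp only [hA, Finset.mem_filter] at hi; exact hi.2
      have hle : ⟪u i, β⟫ ≤ pen β := pen_ge u pen hpen i β
      have : ⟪u i, β⟫ < pen β := lt_of_le_of_ne hle hne
      linarith
    · intro i hi
      by_contra hne
      have hiA : i ∈ A := Finset.mem_filter.mpr ⟨Finset.mem_univ i, hne⟩
      have := Finset.inf'_le (fun i => pen β - ⟪u i, β⟫) hiA
      linarith

/-- Lemma B : subdifferential inclusion in a neighborhood of β. -/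
theorem lemB (β : EuclideanSpace ℝ (Fin p)) :
    ∃ τ > (0:ℝ), ∀ b, ‖b - β‖ ≤ τ → subdiff pen b ⊆ subdiff pen β := by
  classical
  obtain ⟨δ, hδ, hgap⟩ := exists_gap u pen hpen β
  set M : ℝ := Finset.univ.sup' Finset.univ_nonempty fun i => ‖u i‖ with hM
  have hM0 : 0 ≤ M := M_nonneg u
  refine ⟨δ / (4 * (M + 1)), by positivity, fun b hb s hsb => ?_⟩
  rw [subdiff_char u pen hpen] at hsb ⊢
  obtain ⟨hdual, hxb⟩ := hsb
  refine ⟨hdual, ?_⟩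
  -- representation of s as convex combination
  obtain ⟨ι, _, w, z, hw0, hw1, hz, hzs⟩ :=
    mem_convexHull_iff_exists_fintype.mp (dual_mem_hull u pen hpen s hdual)
  -- each z i has ⟪z i, b⟫ ≤ pen b
  have hzle : ∀ i, ⟪z i, b⟫ ≤ pen b := by
    intro i; obtain ⟨j, hj⟩ := hz i; rw [← hj]; exact pen_ge u pen hpen j b
  have hsum : ∑ i, w i * ⟪z i, b⟫ = ⟪s, b⟫ := by
    rw [← hzs, sum_inner]; congr 1; funext i; rw [real_inner_smul_left]
  -- active weights: w i > 0 → ⟪z i, b⟫ = pen b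
  have hactive : ∀ i, w i ≠ 0 → ⟪z i, b⟫ = pen b := by
    intro i hwi
    by_contra hne
    have hlt : ⟪z i, b⟫ < pen b := lt_of_le_of_ne (hzle i) hne
    have : ∑ j, w j * ⟪z j, b⟫ < ∑ j, w j * pen b := by
      refine Finset.sum_lt_sum (fun j _ => mul_le_mul_of_nonneg_left (hzle j) (hw0 j)) ?_
      exact ⟨i, Finset.mem_univ i, by
        have := (hw0 i).lt_of_ne (Ne.symm hwi)
        exact mul_lt_mul_of_pos_left hlt this⟩
    rw [hsum, ← Finset.sum_mul, hw1, one_mul] at this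
    linarith
  -- near β, active at b implies active at β
  have hMlip : |pen b - pen β| ≤ M * ‖b - β‖ := by
    have h1 := pen_lip u pen hpen b β
    have h2 := pen_lip u pen hpen β b
    rw [abs_le]
    constructor
    · have : ‖β - b‖ = ‖b - β‖ := norm_sub_rev β b
      rw [this] at h2; linarith
    · linarith
  have hkey : ∀ i, w i ≠ 0 → ⟪z i, β⟫ = pen β := by
    intro i hwi
    obtain ⟨j, hj⟩ := hz i
    rw [← hj]
    refine hgap j ?_
    have h1 : ⟪u j, b⟫ = pen b := by
      have := hactive i hwi; rw [← hj] at this; exact this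
    have h2 : |⟪u j, b⟫ - ⟪u j, β⟫| ≤ M * ‖b - β‖ := by
      rw [← inner_sub_right]
      calc |⟪u j, b - β⟫| ≤ ‖u j‖ * ‖b - β‖ := abs_real_inner_le_norm _ _
        _ ≤ M * ‖b - β‖ := by
            refine mul_le_mul_of_nonneg_right ?_ (norm_nonneg _)
            exact Finset.le_sup' (fun i => ‖u i‖) (Finset.mem_univ j)
    have hMb : M * ‖b - β‖ ≤ M * (δ / (4 * (M + 1))) :=
      mul_le_mul_of_nonneg_left hb hM0
    have hMs : M * (δ / (4 * (M + 1))) ≤ δ / 4 := by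
      have hq0 : (0:ℝ) ≤ δ / (4 * (M + 1)) := by positivity
      have hq : δ / (4 * (M + 1)) * (4 * (M + 1)) = δ :=
        div_mul_cancel₀ δ (by positivity)
      nlinarith [hq, hq0]
    rw [abs_le] at hMlip h2
    obtain ⟨ha, hb'⟩ := hMlip
    obtain ⟨hc, hd'⟩ := h2
    linarith
  -- conclude ⟪s, β⟫ = pen β
  have : ⟪s, β⟫ = pen β := by
    rw [← hzs, sum_inner]
    have : ∀ i ∈ Finset.univ, ⟪w i • z i, β⟫ = w i * pen β := by
      intro i _
      rw [real_inner_smul_left]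
      rcases eq_or_ne (w i) 0 with h | h
      · rw [h]; ring
      · rw [hkey i h]
    rw [Finset.sum_congr rfl this, ← Finset.sum_mul, hw1, one_mul]
  linarith [this.ge]
end Aux
section Geo

variable {E F : Type*} [NormedAddCommGroup E] [InnerProductSpace ℝ E]
  [NormedAddCommGroup F] [InnerProductSpace ℝ F]
  [FiniteDimensional ℝ E] [FiniteDimensional ℝ F]

/-- positive homogeneous continuous function positive on the unit sphere of a submodule
grows linearly on the submodule. -/
theorem sphere_min (K : Submodule ℝ E) (f : E → ℝ) (hf : Continuous f)
    (hhom : ∀ (c : ℝ), 0 ≤ c → ∀ x, f (c • x) = c * f x)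
    (hpos : ∀ x ∈ K, ‖x‖ = 1 → 0 < f x) :
    ∃ γ > (0:ℝ), ∀ x ∈ K, γ * ‖x‖ ≤ f x := by
  have hf0 : f 0 = 0 := by
    have := hhom 0 le_rfl 0; simpa using this
  by_cases hK : ∀ x ∈ K, x = (0:E)
  · refine ⟨1, one_pos, fun x hx => ?_⟩
    rw [hK x hx, hf0, norm_zero]; norm_num
  · push_neg at hK
    obtain ⟨x0, hx0K, hx0⟩ := hK
    set S : Set ↥K := Metric.sphere 0 1 with hS
    have hScomp : IsCompact S := isCompact_sphere 0 1
    have hSne : S.Nonempty := by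
      refine ⟨⟨‖x0‖⁻¹ • x0, K.smul_mem _ hx0K⟩, ?_⟩
      simp only [hS, Metric.mem_sphere, dist_zero_right]
      rw [show ‖(⟨‖x0‖⁻¹ • x0, K.smul_mem _ hx0K⟩ : ↥K)‖ = ‖‖x0‖⁻¹ • x0‖ from rfl]
      rw [norm_smul, norm_inv, norm_norm]
      exact inv_mul_cancel₀ (norm_ne_zero_iff.mpr hx0)
    obtain ⟨w0, hw0S, hw0min⟩ :=
      hScomp.exists_isMinOn hSne ((hf.comp continuous_subtype_val).continuousOn)
    have hw0norm : ‖(w0 : E)‖ = 1 := by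
      simpa [hS, dist_zero_right] using hw0S
    set γ := f (w0 : E) with hγ
    have hγpos : 0 < γ := hpos _ w0.2 hw0norm
    refine ⟨γ, hγpos, fun x hx => ?_⟩
    rcases eq_or_ne x 0 with rfl | hxne
    · rw [hf0, norm_zero]; norm_num
    · have hxn : (0:ℝ) < ‖x‖ := norm_pos_iff.mpr hxne
      have hmem : (⟨‖x‖⁻¹ • x, K.smul_mem _ hx⟩ : ↥K) ∈ S := by
        simp only [hS, Metric.mem_sphere, dist_zero_right]
        rw [show ‖(⟨‖x‖⁻¹ • x, K.smul_mem _ hx⟩ : ↥K)‖ = ‖‖x‖⁻¹ • x‖ from rfl]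
        rw [norm_smul, norm_inv, norm_norm]
        exact inv_mul_cancel₀ hxn.ne'
      have := hw0min hmem
      simp only [Function.comp_apply] at this
      have h2 : γ ≤ f (‖x‖⁻¹ • x) := this
      have h3 : f (‖x‖⁻¹ • x) = ‖x‖⁻¹ * f x := hhom _ (by positivity) x
      rw [h3] at h2
      calc γ * ‖x‖ ≤ (‖x‖⁻¹ * f x) * ‖x‖ := by nlinarith
        _ = f x := by field_simp
  
/-- adjoint surjectivity onto the orthogonal complement of the kernel -/
theorem adj_surj (T : E →L[ℝ] F) (s : E) (hs : s ∈ (LinearMap.ker T.toLinearMap)ᗮ) :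
    ∃ z, ContinuousLinearMap.adjoint T z = s := by
  have h1 : (LinearMap.range (ContinuousLinearMap.adjoint T).toLinearMap)ᗮ = LinearMap.ker T.toLinearMap := by
    ext x
    rw [Submodule.mem_orthogonal, LinearMap.mem_ker]
    constructor
    · intro h
      have := h (ContinuousLinearMap.adjoint T (T x)) (LinearMap.mem_range_self _ _)
      rw [ContinuousLinearMap.adjoint_inner_left] at this
      exact inner_self_eq_zero.mp this
    · intro h v hv
      obtain ⟨z, rfl⟩ := hv
      change ⟪ContinuousLinearMap.adjoint T z, x⟫ = 0
      change T x = 0 at h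
      rw [ContinuousLinearMap.adjoint_inner_left, h, inner_zero_right]
  have h2 : LinearMap.range (ContinuousLinearMap.adjoint T).toLinearMap = (LinearMap.ker T.toLinearMap)ᗮ := by
    rw [← h1, Submodule.orthogonal_orthogonal]
  rw [← h2] at hs
  exact hs

end Geo
section SupNormLemmas

variable {q : ℕ}

theorem abs_le_supNorm (x : EuclideanSpace ℝ (Fin q)) (i : Fin q) : |x i| ≤ supNorm x := by
  refine le_ciSup (f := fun i => |x i|) ?_ i
  exact Set.Finite.bddAbove (Set.finite_range _)

theorem supNorm_nonneg (x : EuclideanSpace ℝ (Fin q)) : 0 ≤ supNorm x := by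
  rcases isEmpty_or_nonempty (Fin q) with h | h
  · simp [supNorm, ciSup_of_empty, Real.sSup_empty]
  · exact le_trans (abs_nonneg _) (abs_le_supNorm x (Classical.arbitrary _))

theorem abs_coord_le_norm (x : EuclideanSpace ℝ (Fin q)) (i : Fin q) : |x i| ≤ ‖x‖ := by
  rw [EuclideanSpace.norm_eq]
  rw [show |x i| = Real.sqrt ((x i)^2) from (Real.sqrt_sq_eq_abs _).symm]
  refine Real.sqrt_le_sqrt ?_
  have : (x i)^2 = ‖x i‖^2 := by rw [Real.norm_eq_abs, sq_abs]
  rw [this]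
  exact Finset.single_le_sum (f := fun j => ‖x j‖^2) (fun j _ => by positivity)
    (Finset.mem_univ i)

theorem supNorm_le_norm (x : EuclideanSpace ℝ (Fin q)) : supNorm x ≤ ‖x‖ := by
  rcases isEmpty_or_nonempty (Fin q) with h | h
  · rw [show supNorm x = 0 from by simp [supNorm, ciSup_of_empty, Real.sSup_empty]]
    exact norm_nonneg x
  · exact ciSup_le fun i => abs_coord_le_norm x i

theorem norm_le_supNorm (x : EuclideanSpace ℝ (Fin q)) :
    ‖x‖ ≤ Real.sqrt q * supNorm x := by
  rw [EuclideanSpace.norm_eq]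
  have h1 : ∑ i, ‖x i‖^2 ≤ (q : ℝ) * (supNorm x)^2 := by
    calc ∑ i, ‖x i‖^2 ≤ ∑ _i : Fin q, (supNorm x)^2 := by
          refine Finset.sum_le_sum fun i _ => ?_
          have h := abs_le_supNorm x i
          have : ‖x i‖ = |x i| := rfl
          rw [this]
          nlinarith [abs_nonneg (x i)]
      _ = (q : ℝ) * (supNorm x)^2 := by simp [Finset.sum_const, nsmul_eq_mul]
  calc Real.sqrt (∑ i, ‖x i‖^2) ≤ Real.sqrt ((q:ℝ) * (supNorm x)^2) := Real.sqrt_le_sqrt h1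
    _ = Real.sqrt q * supNorm x := by
        rw [Real.sqrt_mul (Nat.cast_nonneg q), Real.sqrt_sq (supNorm_nonneg x)]

end SupNormLemmas
section MainAux

variable {n p k : ℕ} (X : Matrix (Fin n) (Fin p) ℝ)

/-- `X` as a continuous linear map between Euclidean spaces. -/
def Tm : EuclideanSpace ℝ (Fin p) →L[ℝ] EuclideanSpace ℝ (Fin n) :=
  LinearMap.toContinuousLinearMap <|
    ((WithLp.linearEquiv 2 ℝ (Fin n → ℝ)).symm.toLinearMap.comp
      (X.mulVecLin.comp (WithLp.linearEquiv 2 ℝ (Fin p → ℝ)).toLinearMap))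

theorem Tm_apply (b : EuclideanSpace ℝ (Fin p)) : Tm X b = toEuc (X.mulVec b) := rfl

theorem Tm_ker (b : EuclideanSpace ℝ (Fin p)) :
    b ∈ LinearMap.ker (Tm X).toLinearMap ↔ X.mulVec b = 0 := by
  rw [LinearMap.mem_ker]
  constructor
  · intro h
    have := congrArg (WithLp.equiv 2 (Fin n → ℝ)) (h : toEuc (X.mulVec b) = 0)
    exact this
  · intro h
    show toEuc (X.mulVec b) = 0
    rw [h]
    rfl

theorem Tm_eq_iff (b b' : EuclideanSpace ℝ (Fin p)) :
    Tm X b = Tm X b' ↔ X.mulVec b = X.mulVec b' := by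
  rw [Tm_apply, Tm_apply]
  exact (WithLp.equiv 2 (Fin n → ℝ)).symm.injective.eq_iff

end MainAux
section MainAux2

variable {n p k : ℕ} (X : Matrix (Fin n) (Fin p) ℝ)
  (u : Fin (k + 1) → EuclideanSpace ℝ (Fin p))
  (pen : EuclideanSpace ℝ (Fin p) → ℝ)
  (hpen : ∀ x, pen x = Finset.univ.sup' Finset.univ_nonempty fun i => ⟪u i, x⟫)
  (β : EuclideanSpace ℝ (Fin p))
  (hmin : ∀ b : EuclideanSpace ℝ (Fin p), X.mulVec b = X.mulVec β → pen β ≤ pen b)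

include hpen hmin

set_option maxHeartbeats 1000000 in
/-- existence of a Lagrange multiplier: a dual certificate in the orthogonal complement of the
kernel. -/
theorem exists_mult :
    ∃ s : EuclideanSpace ℝ (Fin p), s ∈ (LinearMap.ker (Tm X).toLinearMap)ᗮ ∧
      (∀ v, ⟪s, v⟫ ≤ pen v) ∧ ⟪s, β⟫ = pen β := by
  classical
  set K : Submodule ℝ (EuclideanSpace ℝ (Fin p)) := LinearMap.ker (Tm X).toLinearMap with hK
  set P := K.orthogonalProjection with hP
  set A : Finset (Fin (k+1)) := Finset.univ.filter (fun i => ⟪u i, β⟫ = pen β) with hA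
  obtain ⟨i0, hi0⟩ := pen_exists u pen hpen β
  have hi0A : i0 ∈ A := Finset.mem_filter.mpr ⟨Finset.mem_univ _, hi0⟩
  set C : Set (EuclideanSpace ℝ (Fin p)) :=
    convexHull ℝ ((fun i => ((P (u i) : EuclideanSpace ℝ (Fin p)))) '' (A : Set (Fin (k+1))))
    with hC
  obtain ⟨δ, hδ, hgap⟩ := exists_gap u pen hpen β
  set M : ℝ := Finset.univ.sup' Finset.univ_nonempty fun i => ‖u i‖ with hM
  have hM0 : 0 ≤ M := M_nonneg u
  have hMle : ∀ i (x : EuclideanSpace ℝ (Fin p)), ⟪u i, x⟫ ≤ M * ‖x‖ := by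
    intro i x
    calc ⟪u i, x⟫ ≤ ‖u i‖ * ‖x‖ := real_inner_le_norm _ _
      _ ≤ M * ‖x‖ := mul_le_mul_of_nonneg_right
          (Finset.le_sup' (fun i => ‖u i‖) (Finset.mem_univ i)) (norm_nonneg x)
  have h0C : (0:EuclideanSpace ℝ (Fin p)) ∈ C := by
    by_contra h0
    have hfin : ((fun i => ((P (u i) : EuclideanSpace ℝ (Fin p)))) '' (A : Set (Fin (k+1)))).Finite :=
      (A.finite_toSet).image _
    obtain ⟨f, cc, hf1, hf2⟩ := geometric_hahn_banach_closed_point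
      (convex_convexHull ℝ _) (hfin.isCompact_convexHull ℝ).isClosed h0
    have hcc : cc < 0 := by simpa using hf2
    set d' := (InnerProductSpace.toDual ℝ (EuclideanSpace ℝ (Fin p))).symm f with hd'
    have hdapp : ∀ x, ⟪d', x⟫ = f x := fun x => InnerProductSpace.toDual_symm_apply
    set d : EuclideanSpace ℝ (Fin p) := (P d' : EuclideanSpace ℝ (Fin p)) with hd
    have hdK : d ∈ K := (P d').2
    have hneg : ∀ i ∈ A, ⟪u i, d⟫ < cc := by
      intro i hi
      have h1 : f ((P (u i) : EuclideanSpace ℝ (Fin p))) < cc :=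
        hf1 _ (subset_convexHull ℝ _ (Set.mem_image_of_mem _ (by exact_mod_cast hi)))
      have h2 : ⟪u i, d⟫ = ⟪d', (P (u i) : EuclideanSpace ℝ (Fin p))⟫ := by
        rw [hd, real_inner_comm]; exact Submodule.inner_starProjection_left_eq_right K d' (u i)
      rw [h2, hdapp]
      exact h1
    -- contradiction with hmin at β + t • d
    set t : ℝ := δ / (M * ‖d‖ + 1) with ht
    have ht0 : 0 < t := by positivity
    have hfiber : X.mulVec (β + t • d) = X.mulVec β := by
      have hd0 : X.mulVec d = 0 := (Tm_ker X d).mp hdK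
      rw [Matrix.mulVec_add, Matrix.mulVec_smul, hd0]
      simp
    have hge := hmin (β + t • d) hfiber
    obtain ⟨j, hj⟩ := pen_exists u pen hpen (β + t • d)
    have hj2 : ⟪u j, β⟫ + t * ⟪u j, d⟫ = pen (β + t • d) := by
      rw [← hj, inner_add_right, real_inner_smul_right]
    by_cases hjA : j ∈ A
    · have h1 : ⟪u j, β⟫ = pen β := (Finset.mem_filter.mp hjA).2
      have h2 : ⟪u j, d⟫ < cc := hneg j hjA
      nlinarith [hge, hj2, h1, h2, hcc, ht0]
    · have h1 : ⟪u j, β⟫ ≤ pen β - δ := by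
        by_contra hcon
        push_neg at hcon
        have : ⟪u j, β⟫ = pen β := hgap j (by linarith)
        exact hjA (Finset.mem_filter.mpr ⟨Finset.mem_univ _, this⟩)
      have h2 : t * ⟪u j, d⟫ ≤ t * (M * ‖d‖) :=
        mul_le_mul_of_nonneg_left (hMle j d) ht0.le
      have h3 : t * (M * ‖d‖ + 1) = δ := div_mul_cancel₀ δ (by positivity)
      nlinarith [hge, hj2, h1, h2, h3, ht0]
  -- extract convex combination
  obtain ⟨ι, _, w, z, hw0, hw1, hz, hzs⟩ := mem_convexHull_iff_exists_fintype.mp h0C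
  simp only [Set.mem_image, Finset.mem_coe] at hz
  choose idx hidxA hidx using hz
  refine ⟨∑ i, w i • u (idx i), ?_, ?_, ?_⟩
  · -- belongs to Kᗮ
    have hPs : (P (∑ i, w i • u (idx i)) : EuclideanSpace ℝ (Fin p)) = 0 := by
      rw [map_sum]
      rw [Submodule.coe_sum]
      calc (∑ i, ((P (w i • u (idx i))) : EuclideanSpace ℝ (Fin p)))
          = ∑ i, w i • ((P (u (idx i))) : EuclideanSpace ℝ (Fin p)) := by
            refine Finset.sum_congr rfl fun i _ => by rw [map_smul]; rfl
        _ = ∑ i, w i • z i := by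
            refine Finset.sum_congr rfl fun i _ => by rw [hidx i]
        _ = 0 := hzs
    have : (∑ i, w i • u (idx i)) - (P (∑ i, w i • u (idx i)) : EuclideanSpace ℝ (Fin p)) ∈ Kᗮ :=
      Submodule.sub_starProjection_mem_orthogonal (K := K) (∑ i, w i • u (idx i))
    rw [hPs, sub_zero] at this
    exact this
  · intro v
    rw [sum_inner]
    calc ∑ i, ⟪w i • u (idx i), v⟫ = ∑ i, w i * ⟪u (idx i), v⟫ := by
          refine Finset.sum_congr rfl fun i _ => real_inner_smul_left _ _ _
      _ ≤ ∑ i, w i * pen v := by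
          refine Finset.sum_le_sum fun i _ =>
            mul_le_mul_of_nonneg_left (pen_ge u pen hpen _ v) (hw0 i)
      _ = pen v := by rw [← Finset.sum_mul, hw1, one_mul]
  · rw [sum_inner]
    calc ∑ i, ⟪w i • u (idx i), β⟫ = ∑ i, w i * pen β := by
          refine Finset.sum_congr rfl fun i _ => ?_
          rw [real_inner_smul_left, (Finset.mem_filter.mp (hidxA i)).2]
      _ = pen β := by rw [← Finset.sum_mul, hw1, one_mul]

end MainAux2
section MainAux3

variable {n p k : ℕ} (X : Matrix (Fin n) (Fin p) ℝ) (lam : ℝ) (hlam : 0 < lam)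
  (u : Fin (k + 1) → EuclideanSpace ℝ (Fin p))
  (pen : EuclideanSpace ℝ (Fin p) → ℝ)
  (hpen : ∀ x, pen x = Finset.univ.sup' Finset.univ_nonempty fun i => ⟪u i, x⟫)
  (β : EuclideanSpace ℝ (Fin p))
  (betahat : EuclideanSpace ℝ (Fin n) → EuclideanSpace ℝ (Fin p))
  (huniq : ∀ y, Smin X lam pen y = {betahat y})
  (hmin : ∀ b : EuclideanSpace ℝ (Fin p), X.mulVec b = X.mulVec β → pen β ≤ pen b)

include hlam hpen huniq hmin

/-- uniqueness of the penalty minimizer on the fiber. -/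
theorem lemU (b1 : EuclideanSpace ℝ (Fin p)) (hb1 : X.mulVec b1 = X.mulVec β)
    (hpb1 : pen b1 = pen β) : b1 = β := by
  obtain ⟨s, hsK, hsdual, hsβ⟩ := exists_mult X u pen hpen β hmin
  obtain ⟨z, hz⟩ := adj_surj (Tm X) s hsK
  set y : EuclideanSpace ℝ (Fin n) := Tm X β + lam • z with hy
  have hkey : ∀ b' : EuclideanSpace ℝ (Fin p),
      (1/2) * ‖y - toEuc (X.mulVec β)‖^2 + lam * pen β
        ≤ (1/2) * ‖y - toEuc (X.mulVec b')‖^2 + lam * pen b' := by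
    intro b'
    simp only [← Tm_apply]
    have e1 : y - Tm X β = lam • z := by rw [hy]; abel
    have e2 : y - Tm X b' = lam • z - Tm X (b' - β) := by
      rw [hy, map_sub]; abel
    rw [e1, e2, norm_sub_sq_real]
    have e3 : ⟪lam • z, Tm X (b' - β)⟫ = lam * ⟪s, b' - β⟫ := by
      rw [real_inner_smul_left, ← hz, ContinuousLinearMap.adjoint_inner_left]
    rw [e3]
    have e4 : ⟪s, b' - β⟫ ≤ pen b' - pen β := by
      rw [inner_sub_right, hsβ]
      have := hsdual b'
      linarith
    have e5 : (0:ℝ) ≤ ‖Tm X (b' - β)‖^2 := by positivity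
    nlinarith [e4, e5, hlam]
  have hmemβ : β ∈ Smin X lam pen y := fun b' => hkey b'
  have hmemb1 : b1 ∈ Smin X lam pen y := by
    have e0 : Tm X b1 = Tm X β := (Tm_eq_iff X b1 β).mpr hb1
    have h1 : (1/2) * ‖y - toEuc (X.mulVec b1)‖^2 + lam * pen b1
        = (1/2) * ‖y - toEuc (X.mulVec β)‖^2 + lam * pen β := by
      simp only [← Tm_apply]
      rw [e0, hpb1]
    intro b'
    calc (1/2) * ‖y - toEuc (X.mulVec b1)‖^2 + lam * pen b1
        = (1/2) * ‖y - toEuc (X.mulVec β)‖^2 + lam * pen β := h1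
      _ ≤ _ := hkey b'
  have h1 : β = betahat y := by
    have := huniq y ▸ hmemβ
    simpa using this
  have h2 : b1 = betahat y := by
    have := huniq y ▸ hmemb1
    simpa using this
  rw [h1, h2]

end MainAux3
theorem arith_key (lam γ c M K1 A B C D Ee Ff Pb Pβ rr : ℝ)
    (hlam : 0 < lam) (hγ : 0 < γ) (hc : 0 < c)
    (hK1 : K1 = Ee * Ff + lam * M) (hA0 : 0 ≤ A) (hB0 : 0 ≤ B) (hK10 : 0 ≤ K1)
    (hF : 1/2 * (Ee^2 - 2*D + C^2) + lam * Pb ≤ 1/2 * Ee^2 + lam * (rr * Pβ))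
    (hpen2 : rr * Pβ + γ * B - M * A ≤ Pb)
    (hCS : D ≤ Ee * (Ff * A))
    (hc2 : c * A ≤ C) :
    B + A ≤ 2 * K1 / c ^ 2 + 2 * K1 ^ 2 / (c ^ 2 * lam * γ) := by
  have hmain : (1/2) * (c ^ 2 * A ^ 2) + lam * (γ * B) ≤ K1 * A := by
    have hp2 := mul_le_mul_of_nonneg_left hpen2 hlam.le
    have hKρ : K1 * A = Ee * (Ff * A) + lam * M * A := by rw [hK1]; ring
    have hsq : (c * A) * (c * A) ≤ C * C := by
      have hC0 : 0 ≤ C := le_trans (mul_nonneg hc.le hA0) hc2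
      exact mul_self_le_mul_self (mul_nonneg hc.le hA0) hc2
    nlinarith [hF, hp2, hCS, hsq, hKρ]
  have hρle : A ≤ 2 * K1 / c ^ 2 := by
    have h7 : (1/2) * (c ^ 2 * A ^ 2) ≤ K1 * A := by
      nlinarith [hmain, mul_nonneg (mul_nonneg hlam.le hγ.le) hB0]
    rw [le_div_iff₀ (by positivity : (0:ℝ) < c ^ 2)]
    nlinarith [hA0, h7, hK10]
  have hwle : B ≤ 2 * K1 ^ 2 / (c ^ 2 * lam * γ) := by
    have h8 : lam * (γ * B) ≤ K1 * (2 * K1 / c ^ 2) := by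
      have h9 : K1 * A ≤ K1 * (2 * K1 / c ^ 2) :=
        mul_le_mul_of_nonneg_left hρle hK10
      nlinarith [hmain, mul_nonneg (mul_nonneg (by norm_num : (0:ℝ) ≤ 1/2) (sq_nonneg c)) (sq_nonneg A)]
    rw [le_div_iff₀ (by positivity : (0:ℝ) < c ^ 2 * lam * γ)]
    have h10 : K1 * (2 * K1 / c ^ 2) * c ^ 2 = 2 * K1 ^ 2 := by
      field_simp
    nlinarith [h8, mul_le_mul_of_nonneg_right h8 (by positivity : (0:ℝ) ≤ c ^ 2), h10]
  linarith

section MainAux4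

variable {n p k : ℕ} (X : Matrix (Fin n) (Fin p) ℝ) (lam : ℝ) (hlam : 0 < lam)
  (u : Fin (k + 1) → EuclideanSpace ℝ (Fin p))
  (pen : EuclideanSpace ℝ (Fin p) → ℝ)
  (hpen : ∀ x, pen x = Finset.univ.sup' Finset.univ_nonempty fun i => ⟪u i, x⟫)
  (β : EuclideanSpace ℝ (Fin p))
  (betahat : EuclideanSpace ℝ (Fin n) → EuclideanSpace ℝ (Fin p))
  (huniq : ∀ y, Smin X lam pen y = {betahat y})
  (hmin : ∀ b : EuclideanSpace ℝ (Fin p), X.mulVec b = X.mulVec β → pen β ≤ pen b)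

theorem cbound : ∃ c > (0:ℝ), ∀ ρ ∈ (LinearMap.ker (Tm X).toLinearMap)ᗮ, c * ‖ρ‖ ≤ ‖Tm X ρ‖ := by
  refine sphere_min _ (fun x => ‖Tm X x‖) ((Tm X).continuous.norm) ?_ ?_
  · intro c hc x
    show ‖(Tm X) (c • x)‖ = c * ‖(Tm X) x‖
    rw [map_smul, norm_smul, Real.norm_eq_abs, abs_of_nonneg hc]
  · intro x hx hnorm
    refine lt_of_le_of_ne (norm_nonneg _) (Ne.symm ?_)
    intro h0
    have hker : x ∈ LinearMap.ker (Tm X).toLinearMap := LinearMap.mem_ker.mpr (norm_eq_zero.mp h0)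
    have : ⟪x, x⟫ = (0:ℝ) := (Submodule.mem_orthogonal _ x).mp hx x hker
    have : x = 0 := inner_self_eq_zero.mp this
    rw [this, norm_zero] at hnorm
    norm_num at hnorm

include hlam hpen huniq hmin

theorem growth : ∃ γ > (0:ℝ), ∀ w ∈ LinearMap.ker (Tm X).toLinearMap,
    pen β + γ * ‖w‖ ≤ pen (β + w) := by
  classical
  set A : Finset (Fin (k+1)) := Finset.univ.filter (fun i => ⟪u i, β⟫ = pen β) with hA
  obtain ⟨i0, hi0⟩ := pen_exists u pen hpen β
  have hAne : A.Nonempty := ⟨i0, Finset.mem_filter.mpr ⟨Finset.mem_univ _, hi0⟩⟩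
  set dfun : EuclideanSpace ℝ (Fin p) → ℝ := fun w => A.sup' hAne fun i => ⟪u i, w⟫ with hdfun
  have hdcont : Continuous dfun := by
    refine Continuous.finset_sup'_apply hAne fun i _ => ?_
    exact Continuous.inner continuous_const continuous_id
  have hdhom : ∀ (c : ℝ), 0 ≤ c → ∀ x, dfun (c • x) = c * dfun x := by
    intro c hc x
    have := Finset.comp_sup'_eq_sup'_comp (s := A)
      (f := fun i => ⟪u i, x⟫) hAne (fun t => c * t)
      (fun a b => by exact mul_max_of_nonneg a b hc)
    rw [hdfun]
    simp only
    rw [this]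
    congr 1
    funext i
    simp [Function.comp, inner_smul_right]
  obtain ⟨δ, hδ, hgap⟩ := exists_gap u pen hpen β
  set M : ℝ := Finset.univ.sup' Finset.univ_nonempty fun i => ‖u i‖ with hM
  have hM0 : 0 ≤ M := M_nonneg u
  have hMle : ∀ i (x : EuclideanSpace ℝ (Fin p)), ⟪u i, x⟫ ≤ M * ‖x‖ := by
    intro i x
    calc ⟪u i, x⟫ ≤ ‖u i‖ * ‖x‖ := real_inner_le_norm _ _
      _ ≤ M * ‖x‖ := mul_le_mul_of_nonneg_right
          (Finset.le_sup' (fun i => ‖u i‖) (Finset.mem_univ i)) (norm_nonneg x)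
  have hpos : ∀ w ∈ LinearMap.ker (Tm X).toLinearMap, ‖w‖ = 1 → 0 < dfun w := by
    intro w hwK hwn
    by_contra hcon
    push_neg at hcon
    set t : ℝ := δ / (M * ‖w‖ + (- dfun w) + 1) with ht
    have hden : (0:ℝ) < M * ‖w‖ + (- dfun w) + 1 := by
      have : 0 ≤ - dfun w := by linarith
      positivity
    have ht0 : 0 < t := div_pos hδ hden
    have hfiber : X.mulVec (β + t • w) = X.mulVec β := by
      have hd0 : X.mulVec w = 0 := (Tm_ker X w).mp hwK
      rw [Matrix.mulVec_add, Matrix.mulVec_smul, hd0]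
      simp
    have hub : pen (β + t • w) ≤ pen β := by
      obtain ⟨j, hj⟩ := pen_exists u pen hpen (β + t • w)
      have hj2 : ⟪u j, β⟫ + t * ⟪u j, w⟫ = pen (β + t • w) := by
        rw [← hj, inner_add_right, real_inner_smul_right]
      by_cases hjA : j ∈ A
      · have h1 : ⟪u j, β⟫ = pen β := (Finset.mem_filter.mp hjA).2
        have h2 : ⟪u j, w⟫ ≤ dfun w := Finset.le_sup' (fun i => ⟪u i, w⟫) hjA
        nlinarith [ht0]
      · have h1 : ⟪u j, β⟫ ≤ pen β - δ := by
          by_contra hc2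
          push_neg at hc2
          exact hjA (Finset.mem_filter.mpr ⟨Finset.mem_univ _, hgap j (by linarith)⟩)
        have h2 : t * ⟪u j, w⟫ ≤ t * (M * ‖w‖) :=
          mul_le_mul_of_nonneg_left (hMle j w) ht0.le
        have h3 : t * (M * ‖w‖ + (- dfun w) + 1) = δ := div_mul_cancel₀ δ hden.ne'
        nlinarith [ht0]
    have heq : pen (β + t • w) = pen β := le_antisymm hub (hmin _ hfiber)
    have := lemU X lam hlam u pen hpen β betahat huniq hmin _ hfiber heq
    have hw0 : w = 0 := by
      have h4 : t • w = 0 := by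
        have := congrArg (fun x => x - β) this
        simpa using this
      rcases smul_eq_zero.mp h4 with h | h
      · exact absurd h ht0.ne'
      · exact h
    rw [hw0, norm_zero] at hwn
    norm_num at hwn
  obtain ⟨γ, hγ, hγle⟩ := sphere_min (LinearMap.ker (Tm X).toLinearMap) dfun hdcont hdhom hpos
  refine ⟨γ, hγ, fun w hw => ?_⟩
  obtain ⟨j, hjA, hj⟩ := Finset.exists_mem_eq_sup' hAne fun i => ⟪u i, w⟫
  have h1 : pen (β + w) ≥ ⟪u j, β + w⟫ := pen_ge u pen hpen j (β + w)
  have h2 : ⟪u j, β + w⟫ = pen β + dfun w := by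
    rw [inner_add_right, (Finset.mem_filter.mp hjA).2, hdfun]
    simp only
    rw [hj]
  have h3 := hγle w hw
  linarith


theorem key_bound (ε : EuclideanSpace ℝ (Fin n)) (hu : u 0 = 0) :
    ∃ R : ℝ, 0 ≤ R ∧ ∀ r : ℕ, 1 ≤ r →
      ‖betahat (toEuc (X.mulVec ((r : ℝ) • β)) + ε) - (r : ℝ) • β‖ ≤ R := by
  obtain ⟨γ, hγ, hgrow⟩ := growth X lam hlam u pen hpen β betahat huniq hmin
  obtain ⟨c, hc, hcb⟩ := cbound X
  set M : ℝ := Finset.univ.sup' Finset.univ_nonempty fun i => ‖u i‖ with hM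
  have hM0 : 0 ≤ M := M_nonneg u
  set K1 : ℝ := ‖ε‖ * ‖Tm X‖ + lam * M with hK1
  have hK10 : 0 ≤ K1 :=
    add_nonneg (mul_nonneg (norm_nonneg _) (norm_nonneg _)) (mul_nonneg hlam.le hM0)
  set R : ℝ := 2 * K1 / c ^ 2 + 2 * K1 ^ 2 / (c ^ 2 * lam * γ) with hR
  have hR0 : 0 ≤ R := by
    apply add_nonneg
    · exact div_nonneg (by linarith) (by positivity)
    · exact div_nonneg (by positivity) (by positivity)
  clear_value M K1 R
  refine ⟨R, hR0, fun r hr1 => ?_⟩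
  have hrpos : (0:ℝ) < (r:ℝ) := by exact_mod_cast Nat.lt_of_lt_of_le Nat.zero_lt_one hr1
  have hrne : ((r:ℝ)) ≠ 0 := hrpos.ne'
  set y : EuclideanSpace ℝ (Fin n) := toEuc (X.mulVec ((r : ℝ) • β)) + ε with hy
  set bh : EuclideanSpace ℝ (Fin p) := betahat y with hbh
  have hmem : bh ∈ Smin X lam pen y := by
    have h0 : bh ∈ ({betahat y} : Set (EuclideanSpace ℝ (Fin p))) := rfl
    rw [← huniq y] at h0
    exact h0
  clear_value y bh
  obtain ⟨w, hwK, ρ, hρK, hv⟩ :=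
    Submodule.exists_add_mem_mem_orthogonal (K := LinearMap.ker (Tm X).toLinearMap) (bh - (r:ℝ) • β)
  have hbh_eq : bh = (r:ℝ) • β + (w + ρ) := by
    rw [← hv]; abel
  have hTw : Tm X w = 0 := LinearMap.mem_ker.mp hwK
  have hF := hmem ((r:ℝ) • β)
  have e1 : y - toEuc (X.mulVec ((r:ℝ) • β)) = ε := by
    rw [hy]; abel
  have e2 : y - toEuc (X.mulVec bh) = ε - Tm X ρ := by
    simp only [← Tm_apply]
    rw [hy, hbh_eq, map_add, map_add, hTw]
    simp only [Tm_apply, WithLp.ofLp_smul]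
    abel
  rw [WithLp.ofLp_smul, e1, e2] at hF
  have hpen1 : pen ((r:ℝ) • β) = (r:ℝ) * pen β := pen_smul u pen hpen hrpos.le β
  have hpen2 : (r:ℝ) * pen β + γ * ‖w‖ - M * ‖ρ‖ ≤ pen bh := by
    have h1 : pen ((r:ℝ) • β + w) ≤ pen bh + M * ‖ρ‖ := by
      have e3 : (r:ℝ) • β + w = bh + (-ρ) := by rw [hbh_eq]; abel
      calc pen ((r:ℝ) • β + w) = pen (bh + (-ρ)) := by rw [e3]
        _ ≤ pen bh + pen (-ρ) := pen_add u pen hpen _ _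
        _ ≤ pen bh + M * ‖ρ‖ := by
            have h := pen_le_M u pen hpen (-ρ)
            rw [norm_neg, ← hM] at h
            linarith
    have h2 : (r:ℝ) * pen β + γ * ‖w‖ ≤ pen ((r:ℝ) • β + w) := by
      have e4 : (r:ℝ) • β + w = (r:ℝ) • (β + (r:ℝ)⁻¹ • w) := by
        rw [smul_add, smul_inv_smul₀ hrne]
      have hw' : (r:ℝ)⁻¹ • w ∈ LinearMap.ker (Tm X).toLinearMap := Submodule.smul_mem _ _ hwK
      have h3 := hgrow _ hw'
      have h5 : ‖(r:ℝ)⁻¹ • w‖ = (r:ℝ)⁻¹ * ‖w‖ := by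
        rw [norm_smul, Real.norm_eq_abs, abs_of_nonneg (by positivity)]
      rw [e4, pen_smul u pen hpen hrpos.le]
      rw [h5] at h3
      have h6 : (r:ℝ) * (pen β + γ * ((r:ℝ)⁻¹ * ‖w‖)) = (r:ℝ) * pen β + γ * ‖w‖ := by
        field_simp
      nlinarith [h3]
    linarith
  have hCS : ⟪ε, Tm X ρ⟫ ≤ ‖ε‖ * (‖Tm X‖ * ‖ρ‖) := by
    calc ⟪ε, Tm X ρ⟫ ≤ ‖ε‖ * ‖Tm X ρ‖ := real_inner_le_norm _ _
      _ ≤ ‖ε‖ * (‖Tm X‖ * ‖ρ‖) :=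
        mul_le_mul_of_nonneg_left ((Tm X).le_opNorm ρ) (norm_nonneg ε)
  have hc2 : c * ‖ρ‖ ≤ ‖Tm X ρ‖ := hcb ρ hρK
  have hexp : ‖ε - Tm X ρ‖ ^ 2 = ‖ε‖ ^ 2 - 2 * ⟪ε, Tm X ρ⟫ + ‖Tm X ρ‖ ^ 2 :=
    norm_sub_sq_real ε (Tm X ρ)
  rw [hexp, hpen1] at hF
  rw [hv]
  calc ‖w + ρ‖ ≤ ‖w‖ + ‖ρ‖ := norm_add_le _ _
    _ ≤ 2 * K1 / c ^ 2 + 2 * K1 ^ 2 / (c ^ 2 * lam * γ) :=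
        arith_key lam γ c M K1 ‖ρ‖ ‖w‖ ‖Tm X ρ‖ ⟪ε, Tm X ρ⟫ ‖ε‖ ‖Tm X‖ (pen bh) (pen β)
          ((r:ℝ)) hlam hγ hc hK1 (norm_nonneg ρ) (norm_nonneg w) hK10 hF hpen2 hCS hc2
    _ ≤ R := hR.ge

end MainAux4
set_option maxHeartbeats 1000000 in
/-- Under uniform uniqueness, if `pen(b) ≥ pen(β)` whenever `Xb = Xβ`, then
for `y⁽ʳ⁾ = X(rβ) + ε` there are `r₀` and `τ₀ > 0` such that for all `r ≥ r₀`, with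
`τ = r·τ₀/2`: every `b` within sup-distance `τ` of `β̂(y⁽ʳ⁾)` has `∂pen(b) ⊆ ∂pen(β)`,
and some `b₀` within sup-distance `τ` has `∂pen(b₀) = ∂pen(β)`. -/
theorem thresholded_pattern_recovery {n p k : ℕ}
    (X : Matrix (Fin n) (Fin p) ℝ) (lam : ℝ) (hlam : 0 < lam)
    (u : Fin (k + 1) → EuclideanSpace ℝ (Fin p)) (hu : u 0 = 0)
    (pen : EuclideanSpace ℝ (Fin p) → ℝ)
    (hpen : ∀ x, pen x = Finset.univ.sup' Finset.univ_nonempty fun i => ⟪u i, x⟫)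
    (β : EuclideanSpace ℝ (Fin p)) (ε : EuclideanSpace ℝ (Fin n))
    (betahat : EuclideanSpace ℝ (Fin n) → EuclideanSpace ℝ (Fin p))
    (huniq : ∀ y, Smin X lam pen y = {betahat y})
    (hmin : ∀ b : EuclideanSpace ℝ (Fin p), X.mulVec b = X.mulVec β → pen β ≤ pen b) :
    ∃ r₀ : ℕ, ∃ τ₀ > (0 : ℝ), ∀ r : ℕ, r₀ ≤ r →
      (∀ b : EuclideanSpace ℝ (Fin p),
          supNorm (b - betahat (toEuc (X.mulVec ((r : ℝ) • β)) + ε)) ≤ (r : ℝ) * τ₀ / 2 →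
          subdiff pen b ⊆ subdiff pen β)
      ∧ ∃ b₀ : EuclideanSpace ℝ (Fin p),
          supNorm (b₀ - betahat (toEuc (X.mulVec ((r : ℝ) • β)) + ε)) ≤ (r : ℝ) * τ₀ / 2
          ∧ subdiff pen b₀ = subdiff pen β := by
  obtain ⟨τ', hτ', hτ'prop⟩ := lemB u pen hpen β
  obtain ⟨R, hR0, hRbound⟩ := key_bound X lam hlam u pen hpen β betahat huniq hmin ε hu
  set sp : ℝ := Real.sqrt p + 1 with hsp
  have hsp1 : 1 ≤ sp := by
    have : 0 ≤ Real.sqrt p := Real.sqrt_nonneg _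
    linarith
  have hsp0 : 0 < sp := by linarith
  set τ₀ : ℝ := τ' / sp with hτ₀def
  have hτ₀ : 0 < τ₀ := div_pos hτ' hsp0
  clear_value sp τ₀
  refine ⟨⌈2 * R / τ₀⌉₊ + 1, τ₀, hτ₀, fun r hr => ?_⟩
  have hr1 : 1 ≤ r := le_trans (Nat.le_add_left 1 _) hr
  have hrpos : (0:ℝ) < (r:ℝ) := by exact_mod_cast Nat.lt_of_lt_of_le Nat.zero_lt_one hr1
  have hrne : ((r:ℝ)) ≠ 0 := hrpos.ne'
  have hrR : 2 * R / τ₀ ≤ (r:ℝ) := by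
    calc 2 * R / τ₀ ≤ (⌈2 * R / τ₀⌉₊ : ℝ) := Nat.le_ceil _
      _ ≤ (r:ℝ) := by exact_mod_cast le_trans (Nat.le_succ _) hr
  have hRr : R ≤ (r:ℝ) * τ₀ / 2 := by
    rw [div_le_iff₀ hτ₀] at hrR
    nlinarith
  set y : EuclideanSpace ℝ (Fin n) := toEuc (X.mulVec ((r : ℝ) • β)) + ε with hy
  set bh : EuclideanSpace ℝ (Fin p) := betahat y with hbh
  have hvR : ‖bh - (r:ℝ) • β‖ ≤ R := hRbound r hr1
  constructor
  · intro b hb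
    have hb' : ‖(r:ℝ)⁻¹ • b - β‖ ≤ τ' := by
      have e5 : (r:ℝ)⁻¹ • b - β = (r:ℝ)⁻¹ • (b - (r:ℝ) • β) := by
        rw [smul_sub, inv_smul_smul₀ hrne]
      have e6 : ‖b - (r:ℝ) • β‖ ≤ ‖b - bh‖ + ‖bh - (r:ℝ) • β‖ :=
        norm_sub_le_norm_sub_add_norm_sub b bh _
      have e7 : ‖b - bh‖ ≤ Real.sqrt p * ((r:ℝ) * τ₀ / 2) := by
        calc ‖b - bh‖ ≤ Real.sqrt p * supNorm (b - bh) := norm_le_supNorm _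
          _ ≤ Real.sqrt p * ((r:ℝ) * τ₀ / 2) :=
            mul_le_mul_of_nonneg_left hb (Real.sqrt_nonneg _)
      have e5norm : ‖(r:ℝ)⁻¹ • b - β‖ = (r:ℝ)⁻¹ * ‖b - (r:ℝ) • β‖ := by
        rw [e5, norm_smul, Real.norm_eq_abs, abs_of_nonneg (by positivity)]
      have hiv : (0:ℝ) < (r:ℝ)⁻¹ := by positivity
      have hA1 : ‖b - (r:ℝ) • β‖ ≤ Real.sqrt p * ((r:ℝ) * τ₀ / 2) + R := by
        linarith [e6, e7, hvR]
      have e8 : Real.sqrt p * τ₀ ≤ τ' := by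
        rw [hτ₀def]
        calc Real.sqrt p * (τ' / sp) ≤ sp * (τ' / sp) := by
              refine mul_le_mul_of_nonneg_right ?_ (by positivity)
              rw [hsp]; linarith [Real.sqrt_nonneg (p:ℝ)]
          _ = τ' := by rw [mul_comm, div_mul_cancel₀ τ' hsp0.ne']
      have e9 : τ₀ ≤ τ' := by
        rw [hτ₀def]
        calc τ' / sp ≤ τ' / 1 := by
              exact div_le_div_of_nonneg_left hτ'.le one_pos hsp1
          _ = τ' := div_one τ'
      rw [e5norm]
      calc (r:ℝ)⁻¹ * ‖b - (r:ℝ) • β‖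
          ≤ (r:ℝ)⁻¹ * (Real.sqrt p * ((r:ℝ) * τ₀ / 2) + R) :=
            mul_le_mul_of_nonneg_left hA1 hiv.le
        _ ≤ τ' := by
            have h1 : (r:ℝ)⁻¹ * (r:ℝ) = 1 := inv_mul_cancel₀ hrne
            have h2 := mul_le_mul_of_nonneg_left hRr hiv.le
            have hsq0 : (0:ℝ) ≤ Real.sqrt p := Real.sqrt_nonneg _
            nlinarith [h1, h2, e8, e9, hτ₀, hiv]
    have e10 : subdiff pen b = subdiff pen ((r:ℝ)⁻¹ • b) := by
      conv_lhs => rw [show b = (r:ℝ) • ((r:ℝ)⁻¹ • b) from (smul_inv_smul₀ hrne b).symm]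
      exact subdiff_smul u pen hpen hrpos _
    rw [e10]
    exact hτ'prop _ hb'
  · refine ⟨(r:ℝ) • β, ?_, ?_⟩
    · calc supNorm ((r:ℝ) • β - bh) ≤ ‖(r:ℝ) • β - bh‖ := supNorm_le_norm _
        _ = ‖bh - (r:ℝ) • β‖ := norm_sub_rev _ _
        _ ≤ R := hvR
        _ ≤ (r:ℝ) * τ₀ / 2 := hRr
    · exact subdiff_smul u pen hpen hrpos β
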